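/- Let n ≥ 1, A an n×n complex matrix, and H_s := (A + Aᴴ)/2 its Hermitian part. Let Θ₁₁, Θ₂₂, Θ₁₃, Θ₃₃ ∈ ℝ with Θ₁₁ ≥ Θ₂₂, and suppose Q := (Θ₁₁ − Θ₂₂)·H_s² + Θ₂₂·AᴴA + 2Θ₁₃·H_s + Θ₃₃·I is negative semidefinite. Let u ∈ ℂⁿ with u ≠ 0 and Au ≠ 0, set ρ := ‖Au‖/‖u‖, θ := arccos( Re(uᴴAu)/(‖u‖·‖Au‖) ), and z := ρ·e^{iθ} (or z := ρ·e^{−iθ}). Then Θ₁₁·(Re z)² + Θ₂₂·(Im z)² + 2Θ₁₃·(Re z) + Θ₃₃ ≤ 0, i.e. z lies in the conic region C(Θ). -/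

import Mathlib

open Matrix ComplexOrder

/-- The Hermitian part `H_s = (A + Aᴴ)/2` of a complex matrix. -/
noncomputable def hermPart {n : ℕ} (A : Matrix (Fin n) (Fin n) ℂ) :
    Matrix (Fin n) (Fin n) ℂ :=
  ((1 : ℂ) / 2) • (A + Aᴴ)

/-- The Euclidean norm of a complex vector, `‖u‖ = √(Re(uᴴu))`. -/
noncomputable def evnorm {n : ℕ} (u : Fin n → ℂ) : ℝ :=
  Real.sqrt ((star u ⬝ᵥ u).re)

/-- The conic region `C(Θ) = {z : Θ₁₁(Re z)² + Θ₂₂(Im z)² + 2Θ₁₃(Re z) + Θ₃₃ ≤ 0}`. -/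
def conicRegion (Θ11 Θ22 Θ13 Θ33 : ℝ) : Set ℂ :=
  {z : ℂ | Θ11 * z.re ^ 2 + Θ22 * z.im ^ 2 + 2 * Θ13 * z.re + Θ33 ≤ 0}

lemma cs_aux {n : ℕ} (x y : Fin n → ℂ) :
    ((star x ⬝ᵥ y).re) ^ 2 ≤ (star x ⬝ᵥ x).re * (star y ⬝ᵥ y).re := by
  set X : EuclideanSpace ℂ (Fin n) := (WithLp.equiv 2 _).symm x with hX
  set Y : EuclideanSpace ℂ (Fin n) := (WithLp.equiv 2 _).symm y with hY
  have hXY : (inner ℂ X Y : ℂ) = star x ⬝ᵥ y := by rw [dotProduct_comm]; rfl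
  have hXX : (inner ℂ X X : ℂ) = star x ⬝ᵥ x := by rw [dotProduct_comm]; rfl
  have hYY : (inner ℂ Y Y : ℂ) = star y ⬝ᵥ y := by rw [dotProduct_comm]; rfl
  have h1 : ‖(inner ℂ X Y : ℂ)‖ ≤ ‖X‖ * ‖Y‖ := norm_inner_le_norm X Y
  have h2 : |(inner ℂ X Y : ℂ).re| ≤ ‖(inner ℂ X Y : ℂ)‖ := Complex.abs_re_le_norm _
  have h3 : (RCLike.re (inner ℂ X X : ℂ)) = ‖X‖ ^ 2 := inner_self_eq_norm_sq X
  have h4 : (RCLike.re (inner ℂ Y Y : ℂ)) = ‖Y‖ ^ 2 := inner_self_eq_norm_sq Y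
  rw [← hXY, ← hXX, ← hYY]
  have hre3 : (inner ℂ X X : ℂ).re = ‖X‖ ^ 2 := h3
  have hre4 : (inner ℂ Y Y : ℂ).re = ‖Y‖ ^ 2 := h4
  rw [hre3, hre4]
  nlinarith [abs_nonneg (inner ℂ X Y : ℂ).re, norm_nonneg X, norm_nonneg Y,
    sq_abs (inner ℂ X Y : ℂ).re]

lemma self_dot_real {n : ℕ} (v : Fin n → ℂ) :
    star v ⬝ᵥ v = (((star v ⬝ᵥ v).re : ℝ) : ℂ) := by
  have h := dotProduct_star_self_nonneg v
  have him : (star v ⬝ᵥ v).im = 0 := by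
    have := (Complex.le_def.mp h).2
    simpa using this.symm
  exact Complex.ext (by simp) (by simp [him])

lemma dot_conjT_mul {n : ℕ} (M N : Matrix (Fin n) (Fin n) ℂ) (u : Fin n → ℂ) :
    star u ⬝ᵥ ((Mᴴ * N) *ᵥ u) = star (M *ᵥ u) ⬝ᵥ (N *ᵥ u) := by
  rw [← mulVec_mulVec, dotProduct_mulVec, star_mulVec]

lemma real_key (Θ11 Θ22 Θ13 Θ33 a b c hh : ℝ) (hΘ : Θ22 ≤ Θ11) (ha_pos : 0 < a)
    (F3 : (Θ11 - Θ22) * hh + Θ22 * b + 2 * Θ13 * c + Θ33 * a ≤ 0)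
    (F4 : c ^ 2 ≤ a * hh) :
    Θ11 * (c / a) ^ 2 + Θ22 * (b / a - (c / a) ^ 2) + 2 * Θ13 * (c / a) + Θ33 ≤ 0 := by
  have heq : Θ11 * (c / a) ^ 2 + Θ22 * (b / a - (c / a) ^ 2) + 2 * Θ13 * (c / a) + Θ33
      = ((Θ11 - Θ22) * c ^ 2 + Θ22 * a * b + 2 * Θ13 * c * a + Θ33 * a ^ 2) / a ^ 2 := by
    field_simp
    ring
  rw [heq]
  refine div_nonpos_iff.mpr (Or.inr ⟨?_, sq_nonneg a⟩)
  nlinarith [mul_le_mul_of_nonneg_left F3 ha_pos.le,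
    mul_le_mul_of_nonneg_left F4 (sub_nonneg.mpr hΘ)]

/-- If `Θ₁₁ ≥ Θ₂₂` and `Q = (Θ₁₁-Θ₂₂) H_s² + Θ₂₂ AᴴA + 2Θ₁₃ H_s + Θ₃₃ I ⪯ 0`, then for
`u ≠ 0` with `Au ≠ 0`, the gain-phase points `z = ρ e^{±iθ}` lie in `C(Θ)`. -/
theorem stmt14 {n : ℕ} (hn : 1 ≤ n) (A : Matrix (Fin n) (Fin n) ℂ)
    (Θ11 Θ22 Θ13 Θ33 : ℝ) (hΘ : Θ11 ≥ Θ22)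
    (hQ : (-(((Θ11 - Θ22 : ℝ) : ℂ) • hermPart A ^ 2
        + ((Θ22 : ℝ) : ℂ) • (Aᴴ * A)
        + ((2 * Θ13 : ℝ) : ℂ) • hermPart A
        + ((Θ33 : ℝ) : ℂ) • (1 : Matrix (Fin n) (Fin n) ℂ))).PosSemidef)
    (u : Fin n → ℂ) (hu : u ≠ 0) (hAu : A.mulVec u ≠ 0)
    (ρ θ : ℝ)
    (hρ : ρ = evnorm (A.mulVec u) / evnorm u)
    (hθ : θ = Real.arccos ((star u ⬝ᵥ A.mulVec u).re / (evnorm u * evnorm (A.mulVec u)))) :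
    (ρ : ℂ) * Complex.exp (θ * Complex.I) ∈ conicRegion Θ11 Θ22 Θ13 Θ33 ∧
    (ρ : ℂ) * Complex.exp (-(θ * Complex.I)) ∈ conicRegion Θ11 Θ22 Θ13 Θ33 := by
  set H := hermPart A with hHdef
  have hHherm : Hᴴ = H := by
    simp only [hHdef, hermPart, conjTranspose_smul, conjTranspose_add,
      conjTranspose_conjTranspose]
    rw [add_comm]
    norm_num
  set a := (star u ⬝ᵥ u).re with ha
  set b := (star (A *ᵥ u) ⬝ᵥ (A *ᵥ u)).re with hb
  set c := (star u ⬝ᵥ (A *ᵥ u)).re with hc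
  set hh := (star (H *ᵥ u) ⬝ᵥ (H *ᵥ u)).re with hhh
  have ha_pos : 0 < a := by
    have := Matrix.dotProduct_star_self_pos_iff.mpr hu
    exact (Complex.lt_def.mp this).1
  have hb_pos : 0 < b := by
    have := Matrix.dotProduct_star_self_pos_iff.mpr hAu
    exact (Complex.lt_def.mp this).1
  have hhh_nonneg : 0 ≤ hh := by
    have := dotProduct_star_self_nonneg (H *ᵥ u)
    exact (Complex.le_def.mp this).1
  -- the H term is real, equal to c
  have hHterm : star u ⬝ᵥ (H *ᵥ u) = (c : ℂ) := by
    have h1 : star u ⬝ᵥ (Aᴴ *ᵥ u) = star (star u ⬝ᵥ (A *ᵥ u)) := by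
      rw [dotProduct_mulVec, ← star_mulVec, star_dotProduct]
    have : star u ⬝ᵥ (H *ᵥ u)
        = (1/2 : ℂ) * (star u ⬝ᵥ (A *ᵥ u) + star (star u ⬝ᵥ (A *ᵥ u))) := by
      rw [hHdef, hermPart, smul_mulVec, dotProduct_smul, add_mulVec,
        dotProduct_add, h1]
      simp [smul_eq_mul]
    rw [this, Complex.star_def, Complex.add_conj, ← hc]
    push_cast
    ring
  -- H² term
  have hH2term : star u ⬝ᵥ ((H ^ 2) *ᵥ u) = (hh : ℂ) := by
    have : (H ^ 2) = Hᴴ * H := by rw [hHherm, sq]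
    rw [this, dot_conjT_mul]
    exact self_dot_real _
  have hAAterm : star u ⬝ᵥ ((Aᴴ * A) *ᵥ u) = (b : ℂ) := by
    rw [dot_conjT_mul]
    exact self_dot_real _
  have hSelf : star u ⬝ᵥ u = (a : ℂ) := self_dot_real u
  -- main quadratic-form inequality
  have F3 : (Θ11 - Θ22) * hh + Θ22 * b + 2 * Θ13 * c + Θ33 * a ≤ 0 := by
    have h := hQ.dotProduct_mulVec_nonneg u
    rw [neg_mulVec, dotProduct_neg] at h
    have hE : star u ⬝ᵥ ((((Θ11 - Θ22 : ℝ) : ℂ) • H ^ 2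
        + ((Θ22 : ℝ) : ℂ) • (Aᴴ * A)
        + ((2 * Θ13 : ℝ) : ℂ) • H
        + ((Θ33 : ℝ) : ℂ) • (1 : Matrix (Fin n) (Fin n) ℂ)) *ᵥ u)
        = (((Θ11 - Θ22) * hh + Θ22 * b + 2 * Θ13 * c + Θ33 * a : ℝ) : ℂ) := by
      simp only [add_mulVec, smul_mulVec, dotProduct_add, dotProduct_smul,
        one_mulVec, smul_eq_mul]
      rw [hH2term, hAAterm, hHterm, hSelf]
      push_cast
      ring
    rw [hE] at h
    rw [← Complex.ofReal_neg, ← Complex.ofReal_zero, Complex.real_le_real] at h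
    linarith
  have F4 : c ^ 2 ≤ a * hh := by
    have := cs_aux u (H *ᵥ u)
    rw [hHterm] at this
    simpa [← ha, ← hhh] using this
  have F5 : c ^ 2 ≤ a * b := by
    have := cs_aux u (A *ᵥ u)
    simpa [← ha, ← hb, ← hc] using this
  -- norms
  have hna : evnorm u = Real.sqrt a := rfl
  have hnb : evnorm (A.mulVec u) = Real.sqrt b := rfl
  clear_value a b c hh
  have hsa : (0:ℝ) < Real.sqrt a := Real.sqrt_pos.mpr ha_pos
  have hsb : (0:ℝ) < Real.sqrt b := Real.sqrt_pos.mpr hb_pos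
  have hsa2 : Real.sqrt a * Real.sqrt a = a := Real.mul_self_sqrt ha_pos.le
  have hsb2 : Real.sqrt b * Real.sqrt b = b := Real.mul_self_sqrt hb_pos.le
  set x : ℝ := c / (Real.sqrt a * Real.sqrt b) with hxdef
  have hθ' : θ = Real.arccos x := by rw [hθ, hna, hnb]
  have hx2 : x ^ 2 ≤ 1 := by
    rw [hxdef, div_pow]
    rw [div_le_one (by positivity)]
    calc c ^ 2 ≤ a * b := F5
      _ = (Real.sqrt a * Real.sqrt b) ^ 2 := by rw [mul_pow]; rw [sq, sq, hsa2, hsb2]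
  have hx_lb : -1 ≤ x := by nlinarith
  have hx_ub : x ≤ 1 := by nlinarith
  have hcos : Real.cos θ = x := by rw [hθ']; exact Real.cos_arccos hx_lb hx_ub
  have hsin : Real.sin θ = Real.sqrt (1 - x ^ 2) := by rw [hθ']; exact Real.sin_arccos x
  have hρcos : ρ * Real.cos θ = c / a := by
    rw [hρ, hcos, hna, hnb, hxdef, div_mul_div_comm, ← mul_assoc, hsa2,
      mul_comm a (Real.sqrt b)]
    exact mul_div_mul_left c a hsb.ne'
  have hsab : (Real.sqrt a * Real.sqrt b) ^ 2 = a * b := by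
    rw [mul_pow, sq, sq, hsa2, hsb2]
  have hx2eq : x ^ 2 = c ^ 2 / (a * b) := by rw [hxdef, div_pow, hsab]
  have hρ2 : ρ ^ 2 = b / a := by rw [hρ, hna, hnb, div_pow, sq, sq, hsa2, hsb2]
  have hρsin2 : (ρ * Real.sin θ) ^ 2 = b / a - (c / a) ^ 2 := by
    rw [mul_pow, hρ2, hsin, Real.sq_sqrt (by linarith : (0:ℝ) ≤ 1 - x ^ 2), hx2eq]
    have hane : a ≠ 0 := ha_pos.ne'
    have hbne : b ≠ 0 := hb_pos.ne'
    field_simp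
  -- key inequality
  have key : Θ11 * (c / a) ^ 2 + Θ22 * (b / a - (c / a) ^ 2)
      + 2 * Θ13 * (c / a) + Θ33 ≤ 0 := real_key Θ11 Θ22 Θ13 Θ33 a b c hh hΘ ha_pos F3 F4
  constructor
  · simp only [conicRegion, Set.mem_setOf_eq]
    have hre : ((ρ : ℂ) * Complex.exp (θ * Complex.I)).re = ρ * Real.cos θ := by
      simp [Complex.exp_mul_I, Complex.mul_re, Complex.cos_ofReal_re, Complex.sin_ofReal_re,
        Complex.cos_ofReal_im, Complex.sin_ofReal_im]
    have him : ((ρ : ℂ) * Complex.exp (θ * Complex.I)).im = ρ * Real.sin θ := by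
      simp [Complex.exp_mul_I, Complex.mul_im, Complex.cos_ofReal_re, Complex.sin_ofReal_re,
        Complex.cos_ofReal_im, Complex.sin_ofReal_im]
    rw [hre, him, hρcos, hρsin2]
    exact key
  · simp only [conicRegion, Set.mem_setOf_eq]
    have hneg : -((θ : ℂ) * Complex.I) = ((-θ : ℝ) : ℂ) * Complex.I := by push_cast; ring
    have hexp : Complex.exp (-((θ:ℂ) * Complex.I))
        = Complex.cos θ - Complex.sin θ * Complex.I := by
      rw [hneg, Complex.exp_mul_I, Complex.ofReal_neg, Complex.cos_neg, Complex.sin_neg]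
      ring
    have hre : ((ρ : ℂ) * Complex.exp (-((θ:ℂ) * Complex.I))).re = ρ * Real.cos θ := by
      rw [hexp]
      simp [Complex.mul_re, Complex.sub_re, Complex.sub_im, Complex.mul_im,
        Complex.cos_ofReal_re, Complex.sin_ofReal_re,
        Complex.cos_ofReal_im, Complex.sin_ofReal_im]
    have him : ((ρ : ℂ) * Complex.exp (-((θ:ℂ) * Complex.I))).im = -(ρ * Real.sin θ) := by
      rw [hexp]
      simp [Complex.mul_re, Complex.sub_re, Complex.sub_im, Complex.mul_im,
        Complex.cos_ofReal_re, Complex.sin_ofReal_re,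
        Complex.cos_ofReal_im, Complex.sin_ofReal_im]
    rw [hre, him]
    have hsq : (-(ρ * Real.sin θ)) ^ 2 = (ρ * Real.sin θ) ^ 2 := by ring
    rw [hsq, hρcos, hρsin2]
    exact key
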